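/- Let t₁ ≤ t₂ be real numbers, E : ℝ → ℝ a differentiable function with E(s) ≥ 0 for all s ∈ [t₁,t₂], and g : ℝ → ℝ a continuous nonnegative function, and suppose E'(s) ≤ 2·g(s)·√(E(s)) for all s ∈ [t₁,t₂]. Then √(E(t₂)) ≤ √(E(t₁)) + ∫_{t₁}^{t₂} g(s) ds. -/

import Mathlib

/-- square-root Grönwall: if `E ≥ 0` is differentiable with
`E' ≤ 2 g √E` on `[t₁,t₂]` and `g` continuous nonnegative, then
`√(E t₂) ≤ √(E t₁) + ∫_{t₁}^{t₂} g`. -/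
theorem sqrt_gronwall (t₁ t₂ : ℝ) (h12 : t₁ ≤ t₂) (E g : ℝ → ℝ)
    (hE : Differentiable ℝ E)
    (hEnn : ∀ s ∈ Set.Icc t₁ t₂, 0 ≤ E s)
    (hg : Continuous g) (hgnn : ∀ s : ℝ, 0 ≤ g s)
    (hineq : ∀ s ∈ Set.Icc t₁ t₂, deriv E s ≤ 2 * g s * Real.sqrt (E s)) :
    Real.sqrt (E t₂) ≤ Real.sqrt (E t₁) + ∫ s in t₁..t₂, g s := by
  have hGder : ∀ s : ℝ, HasDerivAt (fun u => ∫ t in t₁..u, g t) (g s) s := by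
    intro s
    exact intervalIntegral.integral_hasDerivAt_right (hg.intervalIntegrable _ _)
      (hg.stronglyMeasurableAtFilter _ _) hg.continuousAt
  have key : ∀ ε : ℝ, 0 < ε →
      Real.sqrt (E t₂ + ε) ≤ Real.sqrt (E t₁ + ε) + ∫ s in t₁..t₂, g s := by
    intro ε hε
    set φ : ℝ → ℝ := fun s => Real.sqrt (E s + ε) - ∫ t in t₁..s, g t with hφ
    have hsqrtder : ∀ s ∈ Set.Icc t₁ t₂,
        HasDerivAt (fun u => Real.sqrt (E u + ε)) (deriv E s / (2 * Real.sqrt (E s + ε))) s := by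
      intro s hs
      have hpos : 0 < E s + ε := by linarith [hEnn s hs]
      have h1 : HasDerivAt (fun u => E u + ε) (deriv E s) s := (hE s).hasDerivAt.add_const ε
      have h2 := (Real.hasDerivAt_sqrt (ne_of_gt hpos)).comp s h1
      rw [show deriv E s / (2 * Real.sqrt (E s + ε)) = 1 / (2 * Real.sqrt (E s + ε)) * deriv E s by ring]
      exact h2
    have hφder : ∀ s ∈ Set.Icc t₁ t₂,
        HasDerivAt φ (deriv E s / (2 * Real.sqrt (E s + ε)) - g s) s := by
      intro s hs
      exact (hsqrtder s hs).sub (hGder s)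
    have hcont : ContinuousOn φ (Set.Icc t₁ t₂) := by
      apply ContinuousOn.sub
      · exact (Real.continuous_sqrt.comp (hE.continuous.add continuous_const)).continuousOn
      · exact (fun s _ => ((hGder s).differentiableAt.continuousAt.continuousWithinAt))
    have hanti : AntitoneOn φ (Set.Icc t₁ t₂) := by
      apply antitoneOn_of_deriv_nonpos (convex_Icc t₁ t₂) hcont
      · intro s hs
        rw [interior_Icc] at hs
        exact (hφder s (Set.mem_Icc_of_Ioo hs)).differentiableAt.differentiableWithinAt
      · intro s hs
        rw [interior_Icc] at hs
        have hs' := Set.mem_Icc_of_Ioo hs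
        rw [(hφder s hs').deriv]
        have hpos : 0 < E s + ε := by linarith [hEnn s hs']
        have hsq : 0 < Real.sqrt (E s + ε) := Real.sqrt_pos.mpr hpos
        have hle : deriv E s ≤ 2 * g s * Real.sqrt (E s + ε) := by
          refine (hineq s hs').trans ?_
          have := Real.sqrt_le_sqrt (by linarith : E s ≤ E s + ε)
          nlinarith [hgnn s]
        have : deriv E s / (2 * Real.sqrt (E s + ε)) ≤ g s := by
          rw [div_le_iff₀ (by positivity)]
          linarith
        linarith
    have := hanti (Set.left_mem_Icc.mpr h12) (Set.right_mem_Icc.mpr h12) h12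
    simp only [hφ, intervalIntegral.integral_same, sub_zero] at this
    linarith
  refine le_of_forall_pos_le_add ?_
  intro δ hδ
  have h1 : Real.sqrt (E t₂) ≤ Real.sqrt (E t₂ + δ ^ 2) :=
    Real.sqrt_le_sqrt (by nlinarith)
  have h2 := key (δ ^ 2) (by positivity)
  have h3 : Real.sqrt (E t₁ + δ ^ 2) ≤ Real.sqrt (E t₁) + δ := by
    have hE1 : 0 ≤ E t₁ := hEnn t₁ (Set.left_mem_Icc.mpr h12)
    have ha := Real.sq_sqrt (by positivity : (0:ℝ) ≤ E t₁ + δ ^ 2)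
    have hb := Real.sq_sqrt hE1
    have hc := Real.sqrt_nonneg (E t₁ + δ ^ 2)
    have hd := Real.sqrt_nonneg (E t₁)
    nlinarith [sq_nonneg (Real.sqrt (E t₁ + δ ^ 2) - Real.sqrt (E t₁) - δ)]
  linarith
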